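/- Let J be an n_L×N real matrix, Q an N×n_L real matrix with JQ invertible, M a P×P symmetric positive definite real matrix, and R, R' two P×N real matrices satisfying Rᵀ M⁻² R' = I (the N×N identity). Then for every nonzero δ ∈ ℝ^{n_L}, the inner product between the loss-gradient update direction R Jᵀ δ and the DFC steady-state update direction M⁻² R' Q (JQ)⁻¹ δ equals ‖δ‖₂² > 0; in particular, the DFC steady-state weight update with layer-specific learning rates lies within 90 degrees of the loss gradient direction. (Proposition 1: DFC steady-state updates are descent directions for arbitrary feedback weights.) -/
import Mathlib


open Matrix

/-- Proposition 1: for arbitrary feedback weights `Q` with `JQ` invertible,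
the inner product between the loss-gradient (backprop) update `R Jᵀ δ` and the
DFC steady-state update with layer-specific learning rates
`M⁻² R' Q (JQ)⁻¹ δ` equals `‖δ‖₂² > 0`; hence the DFC update lies within 90
degrees of the loss gradient direction. -/
theorem dfc_descent_direction {nL N P : ℕ}
    (J : Matrix (Fin nL) (Fin N) ℝ) (Q : Matrix (Fin N) (Fin nL) ℝ)
    (M : Matrix (Fin P) (Fin P) ℝ) (R R' : Matrix (Fin P) (Fin N) ℝ)
    (hJQ : IsUnit (J * Q)) (hM : M.PosDef)
    (hRR : Rᵀ * (M⁻¹ * M⁻¹) * R' = (1 : Matrix (Fin N) (Fin N) ℝ))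
    (δ : Fin nL → ℝ) (hδ : δ ≠ 0) :
    ((R * Jᵀ) *ᵥ δ) ⬝ᵥ (((M⁻¹ * M⁻¹) * R' * Q * (J * Q)⁻¹) *ᵥ δ) = δ ⬝ᵥ δ ∧
      0 < δ ⬝ᵥ δ := by
  constructor
  · have key : (R * Jᵀ)ᵀ * ((M⁻¹ * M⁻¹) * R' * Q * (J * Q)⁻¹)
        = (1 : Matrix (Fin nL) (Fin nL) ℝ) := by
      have h1 : (R * Jᵀ)ᵀ * ((M⁻¹ * M⁻¹) * R' * Q * (J * Q)⁻¹)
          = J * (Rᵀ * (M⁻¹ * M⁻¹) * R') * Q * (J * Q)⁻¹ := by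
        simp [Matrix.transpose_mul, Matrix.mul_assoc]
      rw [h1, hRR, Matrix.mul_one,
        Matrix.mul_nonsing_inv _ (isUnit_iff_isUnit_det _ |>.mp hJQ)]
    calc ((R * Jᵀ) *ᵥ δ) ⬝ᵥ (((M⁻¹ * M⁻¹) * R' * Q * (J * Q)⁻¹) *ᵥ δ)
        = δ ⬝ᵥ (((R * Jᵀ)ᵀ * ((M⁻¹ * M⁻¹) * R' * Q * (J * Q)⁻¹)) *ᵥ δ) := by
          rw [show (R * Jᵀ) *ᵥ δ = δ ᵥ* (R * Jᵀ)ᵀ from (Matrix.vecMul_transpose _ _).symm,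
            ← Matrix.dotProduct_mulVec, Matrix.mulVec_mulVec]
      _ = δ ⬝ᵥ δ := by rw [key, Matrix.one_mulVec]
  · have h : δ ⬝ᵥ δ ≠ 0 := fun h => hδ (by
      ext i
      have := Finset.sum_eq_zero_iff_of_nonneg (fun j _ => mul_self_nonneg (δ j)) |>.mp h i (Finset.mem_univ i)
      exact mul_self_eq_zero.mp this)
    have : 0 ≤ δ ⬝ᵥ δ := Finset.sum_nonneg fun j _ => mul_self_nonneg (δ j)
    exact lt_of_le_of_ne this (Ne.symm h)
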